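/- Fix an integer k ≥ 2, a unit vector v ∈ EuclideanSpace ℝ (Fin m) (‖v‖ = 1), labels y, z̄ : Fin k with z̄ ≠ y, and λ > 0. Define W : Fin k → EuclideanSpace ℝ (Fin m) by W z̄ = λ • v and W z = 0 for z ≠ z̄. Then ∑_{z} ‖W z‖ = λ, and the gradient G(W) of the map W' ↦ ℓ(W'v, y) at W satisfies ‖G(W)‖_F = sqrt( (e^λ + k - 2)² + e^{2λ} + k - 2 ) / (e^λ + k - 1). -/

import Mathlib

open RealInnerProductSpace

/-- The softmax of a score vector. -/
noncomputable def softmax (k : ℕ) (a : Fin k → ℝ) (z : Fin k) : ℝ :=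
  Real.exp (a z) / ∑ w : Fin k, Real.exp (a w)

/-- For the classifier `W` whose only nonzero row is `W z̄ = λ • v`
(with `z̄ ≠ y` and `‖v‖ = 1`), the `(2,1)`-norm of `W` is `λ`, and the Frobenius norm of the
gradient of `W' ↦ ℓ(W'v, y)` at `W` equals
`√((e^λ + k - 2)² + e^{2λ} + k - 2) / (e^λ + k - 1)`. -/
theorem classifier_grad_norm_at_single_row
    (k m : ℕ) (hk : 2 ≤ k) (hm : 0 < m)
    (v : EuclideanSpace ℝ (Fin m)) (hv : ‖v‖ = 1)
    (y zb : Fin k) (hzb : zb ≠ y) (lam : ℝ) (hlam : 0 < lam)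
    (W : Fin k → EuclideanSpace ℝ (Fin m))
    (hW : W = fun z => if z = zb then lam • v else 0) :
    (∑ z : Fin k, ‖W z‖) = lam ∧
    Real.sqrt (∑ z : Fin k,
        ‖(softmax k (fun w => ⟪W w, v⟫) z - if z = y then 1 else 0) • v‖ ^ 2) =
      Real.sqrt ((Real.exp lam + k - 2) ^ 2 + Real.exp (2 * lam) + k - 2) /
        (Real.exp lam + k - 1) := by
  subst hW
  have hk' : (2:ℝ) ≤ (k:ℝ) := by exact_mod_cast hk
  have hep := Real.exp_pos lam
  have hS : 0 < Real.exp lam + (k:ℝ) - 1 := by nlinarith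
  set S : ℝ := Real.exp lam + (k:ℝ) - 1 with hSdef
  constructor
  · rw [Finset.sum_eq_single zb]
    · simp [norm_smul, hv, abs_of_pos hlam]
    · intro b _ hb; simp [hb]
    · simp
  · have ha : ∀ w : Fin k,
        ⟪(if w = zb then lam • v else (0:EuclideanSpace ℝ (Fin m))), v⟫ =
        if w = zb then lam else 0 := by
      intro w; split
      · rw [real_inner_smul_left, real_inner_self_eq_norm_sq, hv]; norm_num
      · exact inner_zero_left v
    have hsum : (∑ w : Fin k, Real.exp (if w = zb then lam else 0)) = S := by
      have h1 : ∀ w : Fin k, Real.exp (if w = zb then lam else 0) =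
          (if w = zb then Real.exp lam - 1 else 0) + 1 := by
        intro w; split <;> simp
      rw [Finset.sum_congr rfl (fun w _ => h1 w), Finset.sum_add_distrib,
        Finset.sum_ite_eq' Finset.univ zb]
      simp [hSdef]
      ring
    have hsm : ∀ z : Fin k, softmax k (fun w =>
        ⟪(if w = zb then lam • v else (0:EuclideanSpace ℝ (Fin m))), v⟫) z =
        (if z = zb then Real.exp lam else 1) / S := by
      intro z
      simp only [softmax, ha]
      rw [hsum]
      split <;> simp
    have hterm : ∀ z : Fin k,
        ‖(softmax k (fun w =>
          ⟪(if w = zb then lam • v else (0:EuclideanSpace ℝ (Fin m))), v⟫) z -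
          if z = y then 1 else 0) • v‖ ^ 2 =
        (1/S)^2 + (if z = zb then (Real.exp lam/S)^2 - (1/S)^2 else 0) +
          (if z = y then (1/S - 1)^2 - (1/S)^2 else 0) := by
      intro z
      rw [hsm z, norm_smul, hv, mul_one, Real.norm_eq_abs, sq_abs]
      by_cases h1 : z = zb
      · subst h1
        rw [if_pos rfl, if_pos rfl, if_neg hzb, if_neg hzb]; ring
      · by_cases h2 : z = y
        · subst h2
          rw [if_neg h1, if_neg h1, if_pos rfl, if_pos rfl]; ring
        · rw [if_neg h1, if_neg h1, if_neg h2, if_neg h2]; ring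
    rw [Finset.sum_congr rfl (fun z _ => hterm z)]
    rw [Finset.sum_add_distrib, Finset.sum_add_distrib,
      Finset.sum_ite_eq' Finset.univ zb, Finset.sum_ite_eq' Finset.univ y,
      Finset.sum_const, Finset.card_univ, Fintype.card_fin]
    simp only [Finset.mem_univ, if_true, nsmul_eq_mul]
    have hN : (0:ℝ) ≤ (Real.exp lam + k - 2) ^ 2 + Real.exp (2 * lam) + k - 2 := by
      nlinarith [Real.exp_pos (2*lam), sq_nonneg (Real.exp lam + (k:ℝ) - 2)]
    have hval : (k:ℝ) * (1/S)^2 + ((Real.exp lam/S)^2 - (1/S)^2) +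
        ((1/S - 1)^2 - (1/S)^2) =
        ((Real.exp lam + k - 2) ^ 2 + Real.exp (2 * lam) + k - 2) / S^2 := by
      have h2 : Real.exp (2 * lam) = Real.exp lam * Real.exp lam := by
        rw [two_mul, Real.exp_add]
      rw [h2, hSdef]
      field_simp [show Real.exp lam + (k:ℝ) - 1 ≠ 0 from ne_of_gt (by linarith)]
      ring
    rw [hval, Real.sqrt_div hN, Real.sqrt_sq hS.le]
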